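/- Fix a dataset X, a function f : 𝒳 → ℝ with ℓ₂-sensitivity Δ, an RDP order α > 1, and a data-independent privacy-bound selector ℰ producing a strictly increasing sequence ε₁ < ε₂ < ⋯ < ε_K from previous outputs and bounds. Let T_i = αΔ²/(2ε_i). Consider: (i) the sequential precision-weighted Gaussian mechanism, which sets σ₁² = αΔ²/(2ε₁), s̃₁ = f(X) + N(0, σ₁²), ŝ₁ = s̃₁, and for 2 ≤ i ≤ K sets σ_i² = αΔ²/(2(ε_i − ε_{i−1})), samples s̃_i = f(X) + N(0, σ_i²) independently, and outputs precision-weighted values ŝ_i = (Σ_{j=1}^i 1/σ_j²)^{−1} Σ_{j=1}^i s̃_j/σ_j²; and (ii) the Brownian mechanism, which outputs ŝ₁ ∼ N(f(X), T₁) and, for 2 ≤ i ≤ K, ŝ_i whose conditional distribution given ŝ_{1:i−1} is N( f(X) + (T_i/T_{i−1})(ŝ_{i−1} − f(X)), (T_{i−1} − T_i)·T_i / T_{i−1} ). Then the joint distribution of (ŝ_{1:K}, ε_{1:K}) is the same for the two mechanisms. -/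

import Mathlib

open MeasureTheory ProbabilityTheory
open scoped NNReal ENNReal

/-- The sequence of adaptively chosen privacy bounds: `ε_i` is computed by the
data-independent selector `E` from the previous outputs `ŝ_{1:i-1}` and the
previous bounds `ε_{1:i-1}` (0-based indexing). -/
noncomputable def epsSeq (E : List ℝ → List ℝ≥0 → ℝ≥0) (ys : ℕ → ℝ) : ℕ → ℝ≥0
  | i => E (List.ofFn fun j : Fin i => ys j) (List.ofFn fun j : Fin i => epsSeq E ys j)

/-- Extension of a finite output sequence to `ℕ` (junk `0` beyond `K`). -/
def extendFn {K : ℕ} (v : Fin K → ℝ) : ℕ → ℝ :=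
  fun n => if h : n < K then v ⟨n, h⟩ else 0

/-- The joint law of a sequential mechanism given, for each step `n`, the
conditional law `κ n` of the `n`-th output given the previous outputs. -/
noncomputable def seqLaw : (K : ℕ) → ((n : ℕ) → (Fin n → ℝ) → Measure ℝ) →
    Measure (Fin K → ℝ)
  | 0, _ => Measure.dirac fun i => i.elim0
  | K + 1, κ => (seqLaw K κ).bind fun v => (κ K v).map (Fin.snoc v)

/-- One step of the sequential precision-weighted Gaussian mechanism
(Algorithm 2): step `0` releases `ŝ₁ = s̃₁ = f(X) + N(0, σ₁²)` with
`σ₁² = αΔ²/(2ε₁)`; step `n+1` draws `s̃ = f(X) + N(0, σ²)` with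
`σ² = αΔ²/(2(ε_cur − ε_prev))` and returns the precision-weighted value
`ŝ_{n+1} = T_cur * (ŝ_n / T_prev + s̃ / σ²)`, where `T_i = αΔ²/(2ε_i)`
(note `Σ_{j<i} s̃_j/σ_j² = ŝ_{i-1}/T_{i-1}`). -/
noncomputable def pwKernel (α Δ : ℝ) (E : List ℝ → List ℝ≥0 → ℝ≥0) (m : ℝ) :
    (n : ℕ) → (Fin n → ℝ) → Measure ℝ
  | 0, _ => gaussianReal m
      (Real.toNNReal (α * Δ ^ 2 / (2 * (epsSeq E (fun _ => 0) 0 : ℝ))))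
  | n + 1, v =>
    let εprev : ℝ := epsSeq E (extendFn v) n
    let εcur : ℝ := epsSeq E (extendFn v) (n + 1)
    let Tprev := α * Δ ^ 2 / (2 * εprev)
    let Tcur := α * Δ ^ 2 / (2 * εcur)
    let σ2 := α * Δ ^ 2 / (2 * (εcur - εprev))
    Measure.map (fun s => Tcur * (v (Fin.last n) / Tprev + s / σ2))
      (gaussianReal m σ2.toNNReal)

/-- One step of the Brownian mechanism: with `T_i = αΔ²/(2ε_i)`, step `0`
releases `ŝ₁ ∼ N(f(X), T₁)`, and step `n+1` releases `ŝ_{n+1}` with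
conditional law
`N(f(X) + (T_cur/T_prev)(ŝ_n − f(X)), (T_prev − T_cur) T_cur / T_prev)`. -/
noncomputable def brKernel (α Δ : ℝ) (E : List ℝ → List ℝ≥0 → ℝ≥0) (m : ℝ) :
    (n : ℕ) → (Fin n → ℝ) → Measure ℝ
  | 0, _ => gaussianReal m
      (Real.toNNReal (α * Δ ^ 2 / (2 * (epsSeq E (fun _ => 0) 0 : ℝ))))
  | n + 1, v =>
    let Tprev := α * Δ ^ 2 / (2 * (epsSeq E (extendFn v) n : ℝ))
    let Tcur := α * Δ ^ 2 / (2 * (epsSeq E (extendFn v) (n + 1) : ℝ))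
    gaussianReal (m + Tcur / Tprev * (v (Fin.last n) - m))
      (Real.toNNReal ((Tprev - Tcur) * Tcur / Tprev))

/-- Auxiliary: affine map of a Gaussian. -/
lemma gaussianReal_map_affine (μ : ℝ) (v : ℝ≥0) (a b : ℝ) :
    (gaussianReal μ v).map (fun s => a * s + b)
      = gaussianReal (a * μ + b) (⟨a ^ 2, sq_nonneg _⟩ * v) := by
  have : (fun s => a * s + b) = (fun x => x + b) ∘ (fun s => a * s) := rfl
  rw [this, ← Measure.map_map (measurable_id'.add_const _) (measurable_const_mul a),
    gaussianReal_map_const_mul, gaussianReal_map_add_const]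
  rfl

lemma kernels_eq (α Δ : ℝ) (hα : 1 < α) (hΔ : 0 < Δ)
    (E : List ℝ → List ℝ≥0 → ℝ≥0)
    (hEpos : ∀ ys : ℕ → ℝ, 0 < epsSeq E ys 0)
    (hEmono : ∀ ys : ℕ → ℝ, StrictMono (epsSeq E ys))
    (m : ℝ) (n : ℕ) (v : Fin n → ℝ) :
    pwKernel α Δ E m n v = brKernel α Δ E m n v := by
  cases n with
  | zero => rfl
  | succ n =>
    simp only [pwKernel, brKernel]
    set e1 : ℝ := (epsSeq E (extendFn v) n : ℝ) with he1
    set e2 : ℝ := (epsSeq E (extendFn v) (n + 1) : ℝ) with he2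
    have h1 : 0 < e1 := by
      have h0 : (0 : ℝ≥0) < epsSeq E (extendFn v) 0 := hEpos _
      have := (hEmono (extendFn v)).monotone (Nat.zero_le n)
      exact_mod_cast lt_of_lt_of_le h0 this
    have h12 : e1 < e2 := by exact_mod_cast hEmono (extendFn v) (Nat.lt_succ_self n)
    have h2 : 0 < e2 := h1.trans h12
    have hc : 0 < α * Δ ^ 2 := by positivity
    set c : ℝ := α * Δ ^ 2 with hcdef
    have hσ2 : 0 < c / (2 * (e2 - e1)) := by
      apply div_pos hc; linarith
    have hTprev : 0 < c / (2 * e1) := by positivity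
    have hTcur : 0 < c / (2 * e2) := by positivity
    have hfun : (fun s : ℝ => c / (2 * e2) * (v (Fin.last n) / (c / (2 * e1)) + s / (c / (2 * (e2 - e1)))))
        = fun s : ℝ => (c / (2 * e2) / (c / (2 * (e2 - e1)))) * s
            + c / (2 * e2) * (v (Fin.last n) / (c / (2 * e1))) := by
      funext s; ring
    rw [hfun, gaussianReal_map_affine]
    congr 1
    · field_simp
      ring
    · rw [← NNReal.coe_inj]
      have hnn : (0:ℝ) ≤ (c / (2 * e1) - c / (2 * e2)) * (c / (2 * e2)) / (c / (2 * e1)) := by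
        apply div_nonneg _ hTprev.le
        apply mul_nonneg _ hTcur.le
        have : c / (2 * e2) ≤ c / (2 * e1) := by
          apply div_le_div_of_nonneg_left hc.le (by positivity) (by linarith)
        linarith
      erw [NNReal.coe_mul, NNReal.coe_mk]
      push_cast [NNReal.coe_mul, NNReal.coe_mk, Real.coe_toNNReal _ hnn, Real.coe_toNNReal _ hσ2.le]
      have hne : e2 - e1 ≠ 0 := by linarith
      field_simp

/-- For a fixed dataset `X`, a function `f` of ℓ₂-sensitivity
`Δ`, an RDP order `α > 1` and a data-independent privacy-bound selector `E`
producing strictly increasing positive bounds, the joint distribution of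
`(ŝ_{1:K}, ε_{1:K})` output by the sequential precision-weighted Gaussian
mechanism (Algorithm 2) coincides with that of the Brownian mechanism
(Algorithm 3). -/
theorem precision_weighted_eq_brownian
    {𝒳 : Type*} (α Δ : ℝ) (hα : 1 < α) (hΔ : 0 < Δ)
    (Neighbor : 𝒳 → 𝒳 → Prop) (hsymm : Symmetric Neighbor)
    (f : 𝒳 → ℝ) (hsens : ∀ X X', Neighbor X X' → |f X - f X'| ≤ Δ)
    (E : List ℝ → List ℝ≥0 → ℝ≥0)
    (hEpos : ∀ ys : ℕ → ℝ, 0 < epsSeq E ys 0)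
    (hEmono : ∀ ys : ℕ → ℝ, StrictMono (epsSeq E ys))
    (K : ℕ) (hK : 0 < K) (X : 𝒳) :
    Measure.map
        (fun v : Fin K → ℝ => (v, fun i : Fin K => epsSeq E (extendFn v) i))
        (seqLaw K (pwKernel α Δ E (f X)))
      = Measure.map
        (fun v : Fin K → ℝ => (v, fun i : Fin K => epsSeq E (extendFn v) i))
        (seqLaw K (brKernel α Δ E (f X))) := by
  have hk : pwKernel α Δ E (f X) = brKernel α Δ E (f X) := by
    funext n v
    exact kernels_eq α Δ hα hΔ E hEpos hEmono (f X) n v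
  rw [hk]
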